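/- Consider a parametrized ODE system dz/dt = (z/t) * F(t, z, c) with q dependent variables z = (z_1,…,z_q), p nonzero real constant parameters c = (c_1,…,c_p), and m = 1+q+p total quantities ordered (t, z, c), where each component F_i is a rational function. Let A ∈ M_{r×m}(ℤ) be such that each F_i is T_A-invariant, and suppose there is a unimodular V ∈ M_m(ℤ) with AV = [I_r | 0] having the block form V = [[0, I_{q+1}, 0], [V_𝔞, V_v̄, V_c]], where the top q+1 rows correspond to (t,z) and the bottom p rows correspond to c, and V_v̄ = [V_t | V_z] with first column V_t. Let W = V⁻¹ and let its bottom p rows be [W_t | W_z | W_c] (first column W_t, next q columns W_z, last p columns W_c). Define the invariants τ := (c^{V_t})·t, ν := c^{V_z} * z, and κ := c^{V_c}. Then for every solution z(t) of the system with nonvanishing components on an open interval not containing 0, the curve ν regarded as a function of τ satisfies dν/dτ = (ν/τ) * F(κ^{W_t}·τ, κ^{W_z} * ν, κ^{W_c}). -/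

import Mathlib

private theorem zpow_sum_aux (a : ℝ) (ha : a ≠ 0) {ι : Type*} (s : Finset ι) (e : ι → ℤ) :
    a ^ (∑ i ∈ s, e i) = ∏ i ∈ s, a ^ e i := by
  classical
  induction s using Finset.induction with
  | empty => simp
  | @insert x t h ih => rw [Finset.sum_insert h, Finset.prod_insert h, zpow_add₀ ha, ih]

private theorem swap_aux {p n : ℕ} (c : Fin p → ℝ) (hc : ∀ b, c b ≠ 0)
    (e : Fin p → Fin n → ℤ) (w : Fin n → ℤ) :
    ∏ j, (∏ b, c b ^ e b j) ^ w j = ∏ b, c b ^ (∑ j, e b j * w j) := by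
  calc ∏ j, (∏ b, c b ^ e b j) ^ w j
      = ∏ j, ∏ b, c b ^ (e b j * w j) := by
        refine Finset.prod_congr rfl fun j _ => ?_
        rw [← Finset.prod_zpow]
        exact Finset.prod_congr rfl fun b _ => (zpow_mul (c b) (e b j) (w j)).symm
    _ = ∏ b, ∏ j, c b ^ (e b j * w j) := Finset.prod_comm
    _ = ∏ b, c b ^ (∑ j, e b j * w j) :=
        Finset.prod_congr rfl fun b _ => (zpow_sum_aux (c b) (hc b) _ _).symm

private theorem prod_zpow_add_aux {p : ℕ} (c : Fin p → ℝ) (hc : ∀ b, c b ≠ 0)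
    (e f : Fin p → ℤ) :
    ∏ b, c b ^ (e b + f b) = (∏ b, c b ^ e b) * (∏ b, c b ^ f b) := by
  rw [← Finset.prod_mul_distrib]
  exact Finset.prod_congr rfl fun b _ => zpow_add₀ (hc b) _ _


/-- Hubert–Labahn, Theorem 7.1.  For the parametrized system
`dz/dt = (z/t) * F(t, z, c)` with `q` dependent variables, `p` nonzero constants `c`,
order `(t, z, c)`, scaling matrix `A ∈ M_{r×m}(ℤ)` fixing each `F_i`, and a unimodular
Hermite multiplier `V` with `AV = [I_r | 0]` of the block form
`V = [[0, I_{q+1}, 0], [V_𝔞, V_v̄, V_c]]` (with `V_v̄ = [V_t | V_z]`, `W = V⁻¹` with bottom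
rows `[W_t | W_z | W_c]`), the invariants `τ = c^{V_t}·t`, `ν = c^{V_z} * z`, `κ = c^{V_c}`
satisfy the reduced system `dν/dτ = (ν/τ) * F(κ^{W_t}·τ, κ^{W_z} * ν, κ^{W_c})`. -/
theorem nondimensionalized_system (q p r p' : ℕ) (hp : p = r + p')
    (F : Fin q → ℝ → (Fin q → ℝ) → (Fin p → ℝ) → ℝ)
    (A : Matrix (Fin r) (Fin (q + 1) ⊕ Fin p) ℤ)
    (V : Matrix (Fin (q + 1) ⊕ Fin p) (Fin r ⊕ (Fin (q + 1) ⊕ Fin p')) ℤ)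
    (W : Matrix (Fin r ⊕ (Fin (q + 1) ⊕ Fin p')) (Fin (q + 1) ⊕ Fin p) ℤ)
    (hVW : V * W = 1) (hWV : W * V = 1)
    (hAV : A * V = Matrix.fromCols 1 0)
    (hV11 : ∀ (a : Fin (q + 1)) (k : Fin r), V (Sum.inl a) (Sum.inl k) = 0)
    (hV12 : ∀ a b : Fin (q + 1), V (Sum.inl a) (Sum.inr (Sum.inl b)) = if a = b then 1 else 0)
    (hV13 : ∀ (a : Fin (q + 1)) (j : Fin p'), V (Sum.inl a) (Sum.inr (Sum.inr j)) = 0)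
    (hinv : ∀ (a : Fin q) (lam : Fin r → ℝ), (∀ k, lam k ≠ 0) →
      ∀ (t : ℝ) (zz : Fin q → ℝ) (cc : Fin p → ℝ),
        t ≠ 0 → (∀ a', zz a' ≠ 0) → (∀ b, cc b ≠ 0) →
        F a ((∏ k, lam k ^ A k (Sum.inl 0)) * t)
          (fun a' => (∏ k, lam k ^ A k (Sum.inl a'.succ)) * zz a')
          (fun b => (∏ k, lam k ^ A k (Sum.inr b)) * cc b) = F a t zz cc)
    (c : Fin p → ℝ) (hc : ∀ b, c b ≠ 0)
    (I : Set ℝ) (hIopen : IsOpen I) (hIconv : Convex ℝ I) (h0I : (0 : ℝ) ∉ I)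
    (z : ℝ → Fin q → ℝ) (hznz : ∀ t ∈ I, ∀ a, z t a ≠ 0)
    (hode : ∀ t ∈ I, ∀ a : Fin q,
      HasDerivAt (fun s => z s a) ((z t a / t) * F a t (z t) c) t) :
    -- ν, viewed as a function of the rescaled time τ = (c^{V_t})·t, solves the
    -- reduced (nondimensionalized) system.
    ∀ s : ℝ, s / (∏ b, c b ^ V (Sum.inr b) (Sum.inr (Sum.inl 0))) ∈ I → ∀ a : Fin q,
      HasDerivAt
        (fun s' => (∏ b, c b ^ V (Sum.inr b) (Sum.inr (Sum.inl a.succ))) *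
          z (s' / (∏ b, c b ^ V (Sum.inr b) (Sum.inr (Sum.inl 0)))) a)
        ((((∏ b, c b ^ V (Sum.inr b) (Sum.inr (Sum.inl a.succ))) *
              z (s / (∏ b, c b ^ V (Sum.inr b) (Sum.inr (Sum.inl 0)))) a) / s) *
          F a
            ((∏ j, (∏ b, c b ^ V (Sum.inr b) (Sum.inr (Sum.inr j))) ^
                W (Sum.inr (Sum.inr j)) (Sum.inl 0)) * s)
            (fun a' =>
              (∏ j, (∏ b, c b ^ V (Sum.inr b) (Sum.inr (Sum.inr j))) ^
                  W (Sum.inr (Sum.inr j)) (Sum.inl a'.succ)) *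
                ((∏ b, c b ^ V (Sum.inr b) (Sum.inr (Sum.inl a'.succ))) *
                  z (s / (∏ b, c b ^ V (Sum.inr b) (Sum.inr (Sum.inl 0)))) a'))
            (fun b =>
              ∏ j, (∏ b', c b' ^ V (Sum.inr b') (Sum.inr (Sum.inr j))) ^
                W (Sum.inr (Sum.inr j)) (Sum.inr b))) s := by
  classical
  -- top rows of W equal A
  have hA : ∀ (k : Fin r) (i : Fin (q + 1) ⊕ Fin p), W (Sum.inl k) i = A k i := by
    have hA' : Matrix.fromCols (1 : Matrix (Fin r) (Fin r) ℤ) (0 : Matrix (Fin r) (Fin (q+1) ⊕ Fin p') ℤ) * W = A := by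
      rw [← hAV, Matrix.mul_assoc, hVW, Matrix.mul_one]
    intro k i
    have h := congrFun (congrFun hA' k) i
    simpa [Matrix.mul_apply, Fintype.sum_sum_type, Matrix.one_apply, ite_mul,
      Finset.sum_ite_eq] using h
  -- middle rows of W are [I | 0]
  have hWmid : ∀ (a : Fin (q + 1)) (i : Fin (q + 1) ⊕ Fin p),
      W (Sum.inr (Sum.inl a)) i = if (Sum.inl a : Fin (q+1) ⊕ Fin p) = i then 1 else 0 := by
    intro a i
    have h := congrFun (congrFun hVW (Sum.inl a)) i
    simpa [Matrix.mul_apply, Fintype.sum_sum_type, hV11, hV12, hV13, Matrix.one_apply,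
      ite_mul, Finset.sum_ite_eq] using h
  -- the key exponent identity
  have hexp : ∀ (b : Fin p) (i : Fin (q + 1) ⊕ Fin p),
      ∑ j, V (Sum.inr b) (Sum.inr (Sum.inr j)) * W (Sum.inr (Sum.inr j)) i
        = (if (Sum.inr b : Fin (q+1) ⊕ Fin p) = i then 1 else 0)
          - (∑ a, V (Sum.inr b) (Sum.inr (Sum.inl a)) *
              (if (Sum.inl a : Fin (q+1) ⊕ Fin p) = i then 1 else 0))
          - ∑ k, V (Sum.inr b) (Sum.inl k) * A k i := by
    intro b i
    have h := congrFun (congrFun hVW (Sum.inr b)) i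
    rw [Matrix.mul_apply] at h
    simp only [Fintype.sum_sum_type, hA, hWmid, Matrix.one_apply] at h
    linarith [h]
  intro s hs a
  set μ : ℝ := ∏ b, c b ^ V (Sum.inr b) (Sum.inr (Sum.inl 0)) with hμdef
  have hμ : μ ≠ 0 :=
    Finset.prod_ne_zero_iff.mpr fun b _ => zpow_ne_zero _ (hc b)
  have htI : s / μ ∈ I := hs
  have ht : s / μ ≠ 0 := fun h => h0I (h ▸ htI)
  have hs0 : s ≠ 0 := fun h => ht (by rw [h, zero_div])
  set lam : Fin r → ℝ := fun k => ∏ b, c b ^ (-V (Sum.inr b) (Sum.inl k)) with hlamdef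
  have hlam : ∀ k, lam k ≠ 0 :=
    fun k => Finset.prod_ne_zero_iff.mpr fun b _ => zpow_ne_zero _ (hc b)
  have hlamA : ∀ i, ∏ k, lam k ^ A k i
      = ∏ b, c b ^ (-∑ k, V (Sum.inr b) (Sum.inl k) * A k i) := by
    intro i
    rw [hlamdef]
    rw [swap_aux c hc (fun b k => -V (Sum.inr b) (Sum.inl k)) (fun k => A k i)]
    refine Finset.prod_congr rfl fun b _ => ?_
    congr 1
    simp [neg_mul]
  have hkap : ∀ i : Fin (q+1) ⊕ Fin p,
      (∏ j, (∏ b, c b ^ V (Sum.inr b) (Sum.inr (Sum.inr j))) ^ W (Sum.inr (Sum.inr j)) i)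
        = ∏ b, c b ^ (∑ j, V (Sum.inr b) (Sum.inr (Sum.inr j)) * W (Sum.inr (Sum.inr j)) i) :=
    fun i => swap_aux c hc _ _
  -- time equality
  have eq_time :
      (∏ j, (∏ b, c b ^ V (Sum.inr b) (Sum.inr (Sum.inr j))) ^ W (Sum.inr (Sum.inr j)) (Sum.inl 0)) * s
        = (∏ k, lam k ^ A k (Sum.inl 0)) * (s / μ) := by
    rw [hkap, hlamA]
    have hSj : ∀ b : Fin p,
        (∑ j, V (Sum.inr b) (Sum.inr (Sum.inr j)) * W (Sum.inr (Sum.inr j)) (Sum.inl (0 : Fin (q+1))))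
          = (-∑ k, V (Sum.inr b) (Sum.inl k) * A k (Sum.inl 0))
            + (-(V (Sum.inr b) (Sum.inr (Sum.inl 0)))) := by
      intro b
      have h := hexp b (Sum.inl 0)
      simp only [Sum.inl.injEq, reduceCtorEq, if_false, mul_ite, mul_one, mul_zero,
        Finset.sum_ite_eq', Finset.mem_univ, if_true] at h
      linarith [h]
    have h1 : (∏ b, c b ^ (∑ j, V (Sum.inr b) (Sum.inr (Sum.inr j)) * W (Sum.inr (Sum.inr j)) (Sum.inl (0 : Fin (q+1)))))
        = (∏ b, c b ^ (-∑ k, V (Sum.inr b) (Sum.inl k) * A k (Sum.inl 0)))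
          * (∏ b, c b ^ (-(V (Sum.inr b) (Sum.inr (Sum.inl 0))))) := by
      rw [← prod_zpow_add_aux c hc]
      exact Finset.prod_congr rfl fun b _ => by rw [hSj b]
    have h2 : (∏ b, c b ^ (-(V (Sum.inr b) (Sum.inr (Sum.inl 0))))) = μ⁻¹ := by
      rw [hμdef, ← Finset.prod_inv_distrib]
      exact Finset.prod_congr rfl fun b _ => zpow_neg (c b) _
    rw [h1, h2, div_eq_mul_inv]
    ring
  -- z equalities
  have eq_z : ∀ a' : Fin q,
      (∏ j, (∏ b, c b ^ V (Sum.inr b) (Sum.inr (Sum.inr j))) ^ W (Sum.inr (Sum.inr j)) (Sum.inl a'.succ)) *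
        ((∏ b, c b ^ V (Sum.inr b) (Sum.inr (Sum.inl a'.succ))) * z (s / μ) a')
        = (∏ k, lam k ^ A k (Sum.inl a'.succ)) * z (s / μ) a' := by
    intro a'
    rw [hkap, hlamA]
    have hSj : ∀ b : Fin p,
        (∑ j, V (Sum.inr b) (Sum.inr (Sum.inr j)) * W (Sum.inr (Sum.inr j)) (Sum.inl a'.succ))
          + V (Sum.inr b) (Sum.inr (Sum.inl a'.succ))
          = -∑ k, V (Sum.inr b) (Sum.inl k) * A k (Sum.inl a'.succ) := by
      intro b
      have h := hexp b (Sum.inl a'.succ)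
      simp only [Sum.inl.injEq, reduceCtorEq, if_false, mul_ite, mul_one, mul_zero,
        Finset.sum_ite_eq', Finset.mem_univ, if_true] at h
      linarith [h]
    have h1 : (∏ b, c b ^ (∑ j, V (Sum.inr b) (Sum.inr (Sum.inr j)) * W (Sum.inr (Sum.inr j)) (Sum.inl a'.succ)))
        * (∏ b, c b ^ V (Sum.inr b) (Sum.inr (Sum.inl a'.succ)))
        = ∏ b, c b ^ (-∑ k, V (Sum.inr b) (Sum.inl k) * A k (Sum.inl a'.succ)) := by
      rw [← prod_zpow_add_aux c hc]
      exact Finset.prod_congr rfl fun b _ => by rw [← hSj b]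
    rw [← mul_assoc, h1]
  -- c equalities
  have eq_c : ∀ b₀ : Fin p,
      (∏ j, (∏ b', c b' ^ V (Sum.inr b') (Sum.inr (Sum.inr j))) ^ W (Sum.inr (Sum.inr j)) (Sum.inr b₀))
        = (∏ k, lam k ^ A k (Sum.inr b₀)) * c b₀ := by
    intro b₀
    rw [hkap, hlamA]
    have hSj : ∀ b : Fin p,
        (∑ j, V (Sum.inr b) (Sum.inr (Sum.inr j)) * W (Sum.inr (Sum.inr j)) (Sum.inr b₀))
          = (-∑ k, V (Sum.inr b) (Sum.inl k) * A k (Sum.inr b₀))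
            + (if b = b₀ then 1 else 0) := by
      intro b
      have h := hexp b (Sum.inr b₀)
      simp only [Sum.inr.injEq, reduceCtorEq, if_false, mul_ite, mul_one, mul_zero,
        Finset.sum_const_zero] at h
      by_cases hbb : b = b₀ <;> simp [hbb] at h ⊢ <;> linarith [h]
    have h1 : (∏ b, c b ^ (∑ j, V (Sum.inr b) (Sum.inr (Sum.inr j)) * W (Sum.inr (Sum.inr j)) (Sum.inr b₀)))
        = (∏ b, c b ^ (-∑ k, V (Sum.inr b) (Sum.inl k) * A k (Sum.inr b₀)))
          * (∏ b, c b ^ (if b = b₀ then (1:ℤ) else 0)) := by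
      rw [← prod_zpow_add_aux c hc]
      exact Finset.prod_congr rfl fun b _ => by rw [hSj b]
    have h2 : (∏ b, c b ^ (if b = b₀ then (1:ℤ) else 0)) = c b₀ := by
      have : ∀ b : Fin p, c b ^ (if b = b₀ then (1:ℤ) else 0) = if b = b₀ then c b else 1 := by
        intro b; split <;> simp
      simp only [this, Finset.prod_ite_eq', Finset.mem_univ, if_true]
    rw [h1, h2]
  -- the F-invariance
  have hF : F a
      ((∏ j, (∏ b, c b ^ V (Sum.inr b) (Sum.inr (Sum.inr j))) ^ W (Sum.inr (Sum.inr j)) (Sum.inl 0)) * s)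
      (fun a' =>
        (∏ j, (∏ b, c b ^ V (Sum.inr b) (Sum.inr (Sum.inr j))) ^ W (Sum.inr (Sum.inr j)) (Sum.inl a'.succ)) *
          ((∏ b, c b ^ V (Sum.inr b) (Sum.inr (Sum.inl a'.succ))) * z (s / μ) a'))
      (fun b =>
        ∏ j, (∏ b', c b' ^ V (Sum.inr b') (Sum.inr (Sum.inr j))) ^ W (Sum.inr (Sum.inr j)) (Sum.inr b))
      = F a (s / μ) (z (s / μ)) c := by
    rw [eq_time, funext eq_z, funext eq_c]
    exact hinv a lam hlam (s / μ) (z (s / μ)) c ht (hznz _ htI) hc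
  -- chain rule
  have hz := hode (s / μ) htI a
  have hdiv : HasDerivAt (fun s' : ℝ => s' / μ) (1 / μ) s := by
    simpa using (hasDerivAt_id s).div_const μ
  have h2 : HasDerivAt (fun s' => z (s' / μ) a)
      ((z (s / μ) a / (s / μ) * F a (s / μ) (z (s / μ)) c) * (1 / μ)) s :=
    by have := hz.comp s hdiv; exact this
  have h3 := h2.const_mul (∏ b, c b ^ V (Sum.inr b) (Sum.inr (Sum.inl a.succ)))
  refine h3.congr_deriv ?_
  rw [hF]
  field_simp
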